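/- The invariant (ω^ω, ω^ω, ≱*) is Borel Tukey equivalent to (𝒫, ω^ω, ⋡), where 𝒫 is the set of partial functions from ω to ω with infinite domain and f ⋡ g means {n ∈ dom(f) : f(n) < g(n)} is infinite. Consequently the diamond principles ◇(𝔟) and ◇(𝒫, ω^ω, ⋡) are equivalent. -/
import Mathlib


/-- `Option ℕ` is a countable discrete space; its Borel σ-algebra is discrete. -/
instance : MeasurableSpace (Option ℕ) := ⊤

/-- The Polish space coding partial functions `ω → ω` with infinite domain
(`none` codes "undefined"). -/
abbrev PartialFns : Type := {f : ℕ → Option ℕ // {n : ℕ | f n ≠ none}.Infinite}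

/-- Borel Tukey reduction `(A,B,E) ≤_T^B (A',B',E')`: Borel maps `φ : A → A'` and
`ψ : B' → B` with `φ(a) E' b → a E ψ(b)`. -/
def BorelTukeyLE {A B A' B' : Type*} [MeasurableSpace A] [MeasurableSpace B]
    [MeasurableSpace A'] [MeasurableSpace B']
    (E : A → B → Prop) (E' : A' → B' → Prop) : Prop :=
  ∃ (φ : A → A') (ψ : B' → B), Measurable φ ∧ Measurable ψ ∧
    ∀ a b, E' (φ a) b → E a (ψ b)

/-- `C` is club in `γ`: a subset of `γ`, unbounded in `γ` and closed under limits. -/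
def IsClubIn (C : Set Ordinal) (γ : Ordinal) : Prop :=
  (∀ x ∈ C, x < γ) ∧
  (∀ α < γ, ∃ β ∈ C, α ≤ β) ∧
  (∀ α < γ, α ≠ 0 → (∀ β < α, ∃ ξ ∈ C, β < ξ ∧ ξ < α) → α ∈ C)

/-- `S` is stationary in `γ`: it meets every club. -/
def IsStationaryIn (S : Set Ordinal) (γ : Ordinal) : Prop :=
  ∀ C : Set Ordinal, IsClubIn C γ → (S ∩ C).Nonempty

noncomputable def omega1 : Ordinal := (Cardinal.aleph 1).ord

/-- The parametrized diamond principle `◇(A,B,E)` for a Borel invariant: for every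
Borel `F : 2^{<ω₁} → A` there is `g : ω₁ → B` guessing every `f ∈ 2^{ω₁}`
stationarily often. -/
def ParamDiamond {A B : Type*} [MeasurableSpace A] (E : A → B → Prop) : Prop :=
  ∀ F : (δ : Ordinal.{0}) → (Set.Iio δ → Bool) → A,
    (∀ δ, δ < omega1 → Measurable (F δ)) →
    ∃ g : Ordinal.{0} → B, ∀ f : Ordinal.{0} → Bool,
      IsStationaryIn {α | α < omega1 ∧ E (F α (fun β => f β.1)) (g α)} omega1

/-- `f ≱* g`: `f` fails to eventually dominate `g`. -/
def NotGeStar (f g : ℕ → ℕ) : Prop := {n : ℕ | f n < g n}.Infinite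

/-- `f ⋡ g` for a partial function `f`: `{n ∈ dom f : f n < g n}` is infinite. -/
def NotSucceq (f : PartialFns) (g : ℕ → ℕ) : Prop :=
  {n : ℕ | ∃ m : ℕ, f.1 n = some m ∧ m < g n}.Infinite

/-! ### Auxiliary definitions and lemmas -/

open Classical in
noncomputable def countF (k : ℕ) (f : ℕ → Option ℕ) : ℕ :=
  Nat.count (fun j => f j ≠ none) k

open Classical in
lemma meas_countF (k : ℕ) : Measurable (countF k) := by
  induction k with
  | zero =>
      have h : countF 0 = fun _ => 0 := by funext f; simp [countF]
      rw [h]; exact measurable_const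
  | succ k ih =>
      have h : countF (k+1) = fun f => countF k f + if f k ≠ none then 1 else 0 := by
        funext f; simp [countF, Nat.count_succ]
      rw [h]
      exact ih.add ((measurable_from_top (f := fun o : Option ℕ =>
        if o ≠ none then 1 else 0)).comp (measurable_pi_apply k))

open Classical in
noncomputable def phi2 : PartialFns → (ℕ → ℕ) :=
  fun f n => (f.1 (Nat.nth (fun k => f.1 k ≠ none) n)).getD 0

open Classical in
lemma meas_phi2 : Measurable phi2 := by
  apply measurable_pi_lambda
  intro n
  apply measurable_to_countable'
  intro m
  have key : (fun f : PartialFns => phi2 f n) ⁻¹' {m} =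
      ⋃ k, {f : PartialFns | countF k f.1 = n ∧ f.1 k ≠ none ∧ (f.1 k).getD 0 = m} := by
    ext f
    simp only [Set.mem_preimage, Set.mem_singleton_iff, Set.mem_iUnion, Set.mem_setOf_eq, phi2]
    constructor
    · intro h
      refine ⟨Nat.nth (fun k => f.1 k ≠ none) n, ?_, ?_, h⟩
      · exact Nat.count_nth_of_infinite f.2 n
      · exact Nat.nth_mem_of_infinite f.2 n
    · rintro ⟨k, hc, hk, hm⟩
      have : Nat.nth (fun k => f.1 k ≠ none) n = k := by
        conv_lhs => rw [← hc]
        exact Nat.nth_count hk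
      rw [this]; exact hm
  rw [key]
  apply MeasurableSet.iUnion
  intro k
  have h1 : MeasurableSet {f : PartialFns | countF k f.1 = n} :=
    ((meas_countF k).comp measurable_subtype_coe) (MeasurableSet.singleton n)
  have h2 : MeasurableSet {f : PartialFns | f.1 k ≠ none ∧ (f.1 k).getD 0 = m} := by
    have : Measurable (fun f : PartialFns => f.1 k) :=
      (measurable_pi_apply k).comp measurable_subtype_coe
    exact this (show MeasurableSet {o : Option ℕ | o ≠ none ∧ o.getD 0 = m} from trivial)
  have h3 : {f : PartialFns | countF k f.1 = n ∧ f.1 k ≠ none ∧ (f.1 k).getD 0 = m}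
      = {f | countF k f.1 = n} ∩ {f | f.1 k ≠ none ∧ (f.1 k).getD 0 = m} := by
    ext f; simp [Set.mem_inter_iff, and_assoc]
  rw [h3]; exact h1.inter h2

noncomputable def psi2 : (ℕ → ℕ) → (ℕ → ℕ) := fun g k => (Finset.range (k+1)).sup g

lemma meas_psi2 : Measurable psi2 := by
  apply measurable_pi_lambda
  intro k
  induction k with
  | zero =>
      have h : (fun g => psi2 g 0) = fun g : ℕ → ℕ => g 0 := by
        funext g; simp [psi2]
      rw [h]; exact measurable_pi_apply 0
  | succ k ih =>
      have h : (fun g => psi2 g (k+1)) = fun g : ℕ → ℕ => (psi2 g k) ⊔ g (k+1) := by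
        funext g
        show (Finset.range (k+1+1)).sup g = _ ⊔ _
        rw [Finset.range_add_one, Finset.sup_insert, sup_comm]; rfl
      rw [h]; exact ih.sup (measurable_pi_apply (k+1))

lemma le_psi2 {g : ℕ → ℕ} {n k : ℕ} (h : n ≤ k) : g n ≤ psi2 g k :=
  Finset.le_sup (Finset.mem_range.2 (Nat.lt_succ_of_le h))

def phi1 : (ℕ → ℕ) → PartialFns :=
  fun f => ⟨fun n => some (f n), by simp [Set.infinite_univ]⟩

lemma meas_phi1 : Measurable phi1 := by
  apply Measurable.subtype_mk
  apply measurable_pi_lambda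
  intro n
  exact (measurable_from_top (f := fun x : ℕ => some x)).comp (measurable_pi_apply n)

lemma tukey1 : BorelTukeyLE NotGeStar NotSucceq := by
  refine ⟨phi1, id, meas_phi1, measurable_id, ?_⟩
  intro a b h
  have : {n : ℕ | ∃ m : ℕ, (phi1 a).1 n = some m ∧ m < b n} = {n : ℕ | a n < b n} := by
    ext n; simp [phi1]
  unfold NotSucceq at h
  rw [this] at h
  exact h

lemma tukey2 : BorelTukeyLE NotSucceq NotGeStar := by
  refine ⟨phi2, psi2, meas_phi2, meas_psi2, ?_⟩
  intro f g h
  unfold NotGeStar at h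
  unfold NotSucceq
  set p : ℕ → Prop := fun k => f.1 k ≠ none with hp
  have hinf : (setOf p).Infinite := f.2
  have hsub : Nat.nth p '' {n : ℕ | phi2 f n < g n} ⊆
      {n : ℕ | ∃ m : ℕ, f.1 n = some m ∧ m < psi2 g n} := by
    rintro _ ⟨n, hn, rfl⟩
    have hpk : p (Nat.nth p n) := Nat.nth_mem_of_infinite hinf n
    obtain ⟨m, hm⟩ : ∃ m, f.1 (Nat.nth p n) = some m :=
      Option.ne_none_iff_exists'.1 hpk
    refine ⟨m, hm, ?_⟩
    have h1 : m = phi2 f n := by simp [phi2, ← hp, hm]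
    have h2 : g n ≤ psi2 g (Nat.nth p n) :=
      le_psi2 ((Nat.nth_strictMono hinf).id_le n)
    calc m = phi2 f n := h1
      _ < g n := hn
      _ ≤ psi2 g (Nat.nth p n) := h2
  exact ((h.image ((Nat.nth_injective hinf).injOn)).mono hsub)

lemma stat_mono {S T : Set Ordinal} {γ : Ordinal} (h : S ⊆ T) :
    IsStationaryIn S γ → IsStationaryIn T γ := by
  intro hs C hC
  obtain ⟨x, hx1, hx2⟩ := hs C hC
  exact ⟨x, h hx1, hx2⟩

lemma diamond_mono {A B A' B' : Type*} [MeasurableSpace A] [MeasurableSpace B]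
    [MeasurableSpace A'] [MeasurableSpace B'] {E : A → B → Prop} {E' : A' → B' → Prop}
    (h : BorelTukeyLE E E') : ParamDiamond E' → ParamDiamond E := by
  obtain ⟨φ, ψ, hφ, hψ, himp⟩ := h
  intro hd F hF
  obtain ⟨g', hg'⟩ := hd (fun δ s => φ (F δ s)) (fun δ hδ => hφ.comp (hF δ hδ))
  refine ⟨fun α => ψ (g' α), fun f => ?_⟩
  refine stat_mono ?_ (hg' f)
  rintro α ⟨h1, h2⟩
  exact ⟨h1, himp _ _ h2⟩

/-- `(ω^ω, ω^ω, ≱*)` and `(𝒫, ω^ω, ⋡)` are Borel Tukey equivalent; consequently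
`◇(𝔟) ≡ ◇(𝒫, ω^ω, ⋡)`. -/
theorem borelTukey_equiv_and_diamond_equiv :
    (BorelTukeyLE NotGeStar NotSucceq ∧ BorelTukeyLE NotSucceq NotGeStar) ∧
    (ParamDiamond NotGeStar ↔ ParamDiamond NotSucceq) := by
  exact ⟨⟨tukey1, tukey2⟩, ⟨diamond_mono tukey2, diamond_mono tukey1⟩⟩
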